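/- arXiv:1502.03520 — 5 statements merged into one kernel-verified Lean document; each statement's English description precedes it below -/
import Mathlib

section
/- Let V be a real n × d matrix of rank d (with d ≤ n) with singular value decomposition V = P Σ Qᵀ, where P is n × d with orthonormal columns P_1, …, P_d, Q is a d × d orthogonal matrix, and Σ = diag(σ_1, …, σ_d) with σ_1 ≥ … ≥ σ_d > 0. Let ζ ∈ ℝ^n, and let c₁, c₂ > 0 be constants. Assume: (i) σ_d ≥ c₁·‖V‖_F/√d; (ii) ‖V‖_F² ≥ n·d; and (iii) |⟨P_i, ζ⟩| ≤ c₂·‖ζ‖₂/√n for every i = 1, …, d. Let V† = Q Σ⁻¹ Pᵀ be the Moore–Penrose pseudo-inverse of V and set ζ̄ = V† ζ. Then ‖ζ̄‖₂ ≤ (c₂/c₁)·(√d/n)·‖ζ‖₂. -/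
open Matrix

/-- Theorem 4.1 (Noise reduction). `V = P Σ Qᵀ` is the SVD of the rank-`d`
word-vector matrix `V` (`P` has orthonormal columns, `Q` is orthogonal,
`σ` are the singular values in decreasing order). Under the isotropy
hypotheses (i) `σ_d ≥ c₁ ‖V‖_F / √d`, (ii) `‖V‖_F² ≥ n d`, and
(iii) `|⟨P_i, ζ⟩| ≤ c₂ ‖ζ‖₂ / √n` for every left singular vector `P_i`,
the pseudo-inverse solution `ζ̄ = V† ζ` satisfies
`‖ζ̄‖₂ ≤ (c₂/c₁) (√d / n) ‖ζ‖₂`. -/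
theorem stmt5 (n d : ℕ) (hd : 0 < d) (hdn : d ≤ n)
    (V : Matrix (Fin n) (Fin d) ℝ) (hrank : V.rank = d)
    (P : Matrix (Fin n) (Fin d) ℝ) (Q : Matrix (Fin d) (Fin d) ℝ) (σ : Fin d → ℝ)
    (hP : Pᵀ * P = 1) (hQ : Qᵀ * Q = 1)
    (hσpos : ∀ i, 0 < σ i) (hσanti : Antitone σ)
    (hSVD : V = P * Matrix.diagonal σ * Qᵀ)
    (ζ : Fin n → ℝ) (c₁ c₂ : ℝ) (hc₁ : 0 < c₁) (hc₂ : 0 < c₂)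
    (h1 : c₁ * Real.sqrt (∑ i, ∑ j, V i j ^ 2) / Real.sqrt d ≤ σ ⟨d - 1, by omega⟩)
    (h2 : (n : ℝ) * d ≤ ∑ i, ∑ j, V i j ^ 2)
    (h3 : ∀ i : Fin d, |∑ j, P j i * ζ j| ≤ c₂ * Real.sqrt (∑ j, ζ j ^ 2) / Real.sqrt n) :
    Real.sqrt (∑ i, ((Q * Matrix.diagonal (fun i => (σ i)⁻¹) * Pᵀ).mulVec ζ) i ^ 2)
      ≤ (c₂ / c₁) * (Real.sqrt d / n) * Real.sqrt (∑ j, ζ j ^ 2) := by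
  have hn : 0 < n := lt_of_lt_of_le hd hdn
  have hsn : (0:ℝ) < Real.sqrt n := Real.sqrt_pos.2 (by positivity)
  have hsd : (0:ℝ) < Real.sqrt d := Real.sqrt_pos.2 (by exact_mod_cast hd)
  set s := Real.sqrt (∑ j, ζ j ^ 2) with hs
  have hs0 : 0 ≤ s := Real.sqrt_nonneg _
  set σd := σ ⟨d - 1, by omega⟩ with hσd
  have hσdpos : 0 < σd := hσpos _
  -- step: σd ≥ c₁ √n
  have hσn : c₁ * Real.sqrt n ≤ σd := by
    have hF : Real.sqrt ((n:ℝ) * d) ≤ Real.sqrt (∑ i, ∑ j, V i j ^ 2) :=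
      Real.sqrt_le_sqrt h2
    have : c₁ * Real.sqrt ((n:ℝ) * d) / Real.sqrt d ≤
        c₁ * Real.sqrt (∑ i, ∑ j, V i j ^ 2) / Real.sqrt d := by
      gcongr
    refine le_trans (le_of_eq ?_) (this.trans h1)
    rw [Real.sqrt_mul (by positivity)]
    field_simp
  -- the vector
  set u : Fin d → ℝ := fun i => (σ i)⁻¹ * ∑ j, P j i * ζ j with hu
  have hw : (Q * Matrix.diagonal (fun i => (σ i)⁻¹) * Pᵀ).mulVec ζ = Q.mulVec u := by
    rw [← Matrix.mulVec_mulVec, ← Matrix.mulVec_mulVec]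
    congr 1
    funext i
    simp [hu, Matrix.mulVec, dotProduct, Matrix.diagonal_apply, ite_mul,
      Finset.sum_ite_eq]
  have hsum : ∑ i, ((Q * Matrix.diagonal (fun i => (σ i)⁻¹) * Pᵀ).mulVec ζ) i ^ 2
      = ∑ i, u i ^ 2 := by
    rw [hw]
    have h1' : ∑ i, (Q.mulVec u) i ^ 2 = (Q.mulVec u) ⬝ᵥ (Q.mulVec u) := by
      simp [dotProduct, sq]
    have h2' : ∑ i, u i ^ 2 = u ⬝ᵥ u := by simp [dotProduct, sq]
    have hvm : (Q *ᵥ u) ᵥ* Q = u := by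
      rw [← Matrix.mulVec_transpose, Matrix.mulVec_mulVec, hQ, Matrix.one_mulVec]
    rw [h1', h2', Matrix.dotProduct_mulVec, hvm]
  rw [hsum]
  set B := σd⁻¹ * (c₂ * s / Real.sqrt n) with hB
  have hB0 : 0 ≤ B := by positivity
  have hterm : ∀ i, u i ^ 2 ≤ B ^ 2 := by
    intro i
    have hσi : σd ≤ σ i := hσanti (by
      rw [Fin.le_def]; simp; omega)
    have habs : |u i| ≤ B := by
      rw [hu]
      simp only
      rw [abs_mul, abs_of_nonneg (inv_nonneg.2 (hσpos i).le), hB]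
      have h1i : (σ i)⁻¹ ≤ σd⁻¹ := by
        apply inv_anti₀ hσdpos hσi
      exact mul_le_mul h1i (h3 i) (abs_nonneg _) (inv_nonneg.2 hσdpos.le)
    calc u i ^ 2 = |u i| ^ 2 := (sq_abs _).symm
      _ ≤ B ^ 2 := pow_le_pow_left₀ (abs_nonneg _) habs 2
  have hsum2 : ∑ i, u i ^ 2 ≤ (d : ℝ) * B ^ 2 := by
    calc ∑ i, u i ^ 2 ≤ ∑ _i : Fin d, B ^ 2 := Finset.sum_le_sum fun i _ => hterm i
      _ = (d : ℝ) * B ^ 2 := by simp [Finset.sum_const, nsmul_eq_mul]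
  have hnn : Real.sqrt n * Real.sqrt n = (n : ℝ) := Real.mul_self_sqrt (by positivity)
  calc Real.sqrt (∑ i, u i ^ 2) ≤ Real.sqrt ((d : ℝ) * B ^ 2) := Real.sqrt_le_sqrt hsum2
    _ = Real.sqrt d * B := by
        rw [Real.sqrt_mul (by positivity), Real.sqrt_sq hB0]
    _ ≤ Real.sqrt d * ((c₁ * Real.sqrt n)⁻¹ * (c₂ * s / Real.sqrt n)) := by
        rw [hB]
        gcongr
    _ = (c₂ / c₁) * (Real.sqrt d / n) * s := by
        field_simp
        conv_lhs => rw [← hnn]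
        ring
end

section
/- For every constant K ≥ 1 there exist constants c > 0 and n₀ depending only on K such that the following holds for all integers n ≥ n₀ and d ≥ 1: if c is uniformly distributed on the unit sphere S^{d−1} of ℝ^d, v ∈ ℝ^d satisfies ‖v‖₂ ≤ K√d, z = ⟨v, c⟩, and t ≥ (log n)^{0.9} is such that P[z ≥ t] ≤ exp(−(K+1)·log² n), then E[exp(z)·1_{z ≥ t}] ≤ exp(−c·(log n)^{1.8}). -/
open MeasureTheory ProbabilityTheory Real
open scoped ENNReal NNReal

/-- The standard Gaussian measure `N(0, I_d)` on `ℝ^d`. -/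
noncomputable def stdGaussian (d : ℕ) : Measure (EuclideanSpace ℝ (Fin d)) :=
  (Measure.pi fun _ : Fin d => gaussianReal 0 1).map
    (EuclideanSpace.equiv (Fin d) ℝ).symm

/-- The uniform (rotation-invariant) probability distribution on the unit sphere
`S^{d-1}` of `ℝ^d`, realized as the law of `g / ‖g‖` for a standard Gaussian `g`. -/
noncomputable def uniformSphere (d : ℕ) : Measure (EuclideanSpace ℝ (Fin d)) :=
  (stdGaussian d).map (fun x => ‖x‖⁻¹ • x)

lemma gauss_lint_exp_mul (c : ℝ) :
    ∫⁻ x : ℝ, ENNReal.ofReal (rexp (c * x)) ∂(gaussianReal 0 1)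
      = ENNReal.ofReal (rexp (c ^ 2 / 2)) := by
  rw [gaussianReal_of_var_ne_zero 0 one_ne_zero]
  rw [lintegral_withDensity_eq_lintegral_mul _ (measurable_gaussianPDF 0 1)
    ((measurable_id'.const_mul c).exp.ennreal_ofReal)]
  have hpt : ∀ x : ℝ, (gaussianPDF 0 1 * fun x => ENNReal.ofReal (rexp (c * x))) x
      = ENNReal.ofReal ((√(2 * π))⁻¹ * rexp (c ^ 2 / 2) * rexp (-(1/2) * (x - c) ^ 2)) := by
    intro x
    simp only [Pi.mul_apply, gaussianPDF, ← ENNReal.ofReal_mul (gaussianPDFReal_nonneg 0 1 x)]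
    congr 1
    simp only [gaussianPDFReal]
    push_cast
    rw [mul_one, mul_assoc, ← Real.exp_add, mul_assoc, ← Real.exp_add]
    ring_nf
  simp_rw [hpt]
  have hint : Integrable (fun x : ℝ =>
      (√(2 * π))⁻¹ * rexp (c ^ 2 / 2) * rexp (-(1/2) * (x - c) ^ 2)) := by
    exact ((integrable_exp_neg_mul_sq (by norm_num : (0:ℝ) < 1/2)).comp_sub_right c).const_mul _
  rw [← ofReal_integral_eq_lintegral_ofReal hint (by
    filter_upwards with x
    positivity)]
  congr 1
  rw [integral_const_mul, integral_sub_right_eq_self (fun x => rexp (-(1/2) * x ^ 2)) c,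
    integral_gaussian]
  rw [show π / (1/2) = 2 * π by ring]
  rw [mul_comm ((√(2 * π))⁻¹) _, mul_assoc]
  rw [inv_mul_cancel₀ (by positivity : √(2 * π) ≠ 0), mul_one]

lemma gauss_lint_exp_neg_sq :
    ∫⁻ x : ℝ, ENNReal.ofReal (rexp (-x ^ 2)) ∂(gaussianReal 0 1)
      ≤ ENNReal.ofReal (rexp (-(1/2) : ℝ)) := by
  rw [gaussianReal_of_var_ne_zero 0 one_ne_zero]
  rw [lintegral_withDensity_eq_lintegral_mul _ (measurable_gaussianPDF 0 1)
    (show Measurable fun x : ℝ => ENNReal.ofReal (rexp (-x ^ 2)) from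
      (measurable_id'.pow_const 2).neg.exp.ennreal_ofReal)]
  have hpt : ∀ x : ℝ, (gaussianPDF 0 1 * fun x => ENNReal.ofReal (rexp (-x ^ 2))) x
      = ENNReal.ofReal ((√(2 * π))⁻¹ * rexp (-(3/2) * x ^ 2)) := by
    intro x
    simp only [Pi.mul_apply, gaussianPDF, ← ENNReal.ofReal_mul (gaussianPDFReal_nonneg 0 1 x)]
    congr 1
    simp only [gaussianPDFReal]
    push_cast
    rw [mul_one, mul_assoc, ← Real.exp_add]
    ring_nf
  simp_rw [hpt]
  have hint : Integrable (fun x : ℝ => (√(2 * π))⁻¹ * rexp (-(3/2) * x ^ 2)) :=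
    (integrable_exp_neg_mul_sq (by norm_num : (0:ℝ) < 3/2)).const_mul _
  rw [← ofReal_integral_eq_lintegral_ofReal hint (by filter_upwards with x; positivity)]
  apply ENNReal.ofReal_le_ofReal
  rw [integral_const_mul, integral_gaussian]
  have h1 : √(π / (3/2)) = √(2 * π) * √((3:ℝ)⁻¹) := by
    rw [← Real.sqrt_mul (by positivity)]
    congr 1
    ring
  rw [h1, ← mul_assoc, inv_mul_cancel₀ (by positivity : √(2 * π) ≠ 0), one_mul]
  have h2 : rexp (-(1/2) : ℝ) = √(rexp (-1)) := by
    rw [← Real.exp_half]; norm_num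
  have h3 : (3:ℝ)⁻¹ ≤ rexp (-1) := by
    rw [Real.exp_neg]
    apply inv_anti₀ (Real.exp_pos 1)
    exact Real.exp_one_lt_d9.le.trans (by norm_num)
  rw [h2]
  exact Real.sqrt_le_sqrt h3

lemma lintegral_pi_prod (γ : Measure ℝ) [SigmaFinite γ] :
    ∀ (n : ℕ) (f : Fin n → ℝ → ℝ≥0∞), (∀ i, Measurable (f i)) →
      ∫⁻ x : Fin n → ℝ, ∏ i, f i (x i) ∂(Measure.pi fun _ => γ)
        = ∏ i, ∫⁻ x, f i x ∂γ := by
  intro n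
  induction n with
  | zero =>
      intro f _
      simp [lintegral_const, Measure.pi_univ]
  | succ n ih =>
      intro f hf
      have hmp := (measurePreserving_piFinSuccAbove (fun _ : Fin (n+1) => γ) 0)
      set e := MeasurableEquiv.piFinSuccAbove (fun _ : Fin (n+1) => ℝ) 0
      have hg : Measurable fun p : ℝ × (Fin n → ℝ) => f 0 p.1 * ∏ i, f i.succ (p.2 i) := by
        refine Measurable.mul ((hf 0).comp measurable_fst) ?_
        exact Finset.measurable_prod _ fun i _ => (hf i.succ).comp (measurable_pi_apply i |>.comp measurable_snd)
      have key : ∫⁻ x : Fin (n+1) → ℝ, ∏ i, f i (x i) ∂(Measure.pi fun _ => γ)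
          = ∫⁻ p : ℝ × (Fin n → ℝ), f 0 p.1 * ∏ i, f i.succ (p.2 i)
              ∂(γ.prod (Measure.pi fun _ : Fin n => γ)) := by
        rw [← hmp.lintegral_comp_emb (MeasurableEquiv.measurableEmbedding e)]
        congr 1
        ext x
        simp only [e, MeasurableEquiv.piFinSuccAbove_apply, Fin.removeNth]
        rw [Fin.prod_univ_succ]
        congr 1
      have hprod : Measurable fun y : Fin n → ℝ => ∏ i, f i.succ (y i) :=
        Finset.measurable_prod _ fun i _ => (hf i.succ).comp (measurable_pi_apply i)
      rw [key, lintegral_prod _ hg.aemeasurable]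
      simp_rw [lintegral_const_mul _ hprod]
      rw [lintegral_mul_const _ (hf 0), ih (fun i => f i.succ) (fun i => hf i.succ),
        Fin.prod_univ_succ]

lemma measurable_equiv_symm (d : ℕ) :
    Measurable ((EuclideanSpace.equiv (Fin d) ℝ).symm : (Fin d → ℝ) → EuclideanSpace ℝ (Fin d)) :=
  (EuclideanSpace.equiv (Fin d) ℝ).symm.continuous.measurable

lemma stdGaussian_lint_exp_inner (d : ℕ) (v : EuclideanSpace ℝ (Fin d)) (c : ℝ) :
    ∫⁻ x, ENNReal.ofReal (rexp (c * (inner ℝ v x : ℝ))) ∂(stdGaussian d)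
      = ENNReal.ofReal (rexp (c ^ 2 * ‖v‖ ^ 2 / 2)) := by
  have hmeas : Measurable fun x : EuclideanSpace ℝ (Fin d) =>
      ENNReal.ofReal (rexp (c * (inner ℝ v x : ℝ))) := by
    apply Measurable.ennreal_ofReal
    exact (Real.continuous_exp.comp
      (continuous_const.mul (continuous_const.inner continuous_id'))).measurable
  rw [_root_.stdGaussian, lintegral_map hmeas (measurable_equiv_symm d)]
  have h1 : ∀ y : Fin d → ℝ,
      (inner ℝ v ((EuclideanSpace.equiv (Fin d) ℝ).symm y) : ℝ) = ∑ i, v i * y i := by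
    intro y
    rw [PiLp.inner_apply]
    congr 1
    ext i; simp [mul_comm]
  have h2 : ∀ y : Fin d → ℝ,
      ENNReal.ofReal (rexp (c * (inner ℝ v ((EuclideanSpace.equiv (Fin d) ℝ).symm y) : ℝ)))
        = ∏ i, ENNReal.ofReal (rexp ((c * v i) * y i)) := by
    intro y
    rw [h1, Finset.mul_sum, Real.exp_sum, ← ENNReal.ofReal_prod_of_nonneg]
    · congr 1
      exact Finset.prod_congr rfl fun i _ => by ring_nf
    · intro i _; positivity
  simp_rw [h2]
  rw [lintegral_pi_prod _ _ _ (fun i => (measurable_id'.const_mul _).exp.ennreal_ofReal)]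
  simp_rw [gauss_lint_exp_mul]
  rw [← ENNReal.ofReal_prod_of_nonneg (fun i _ => (Real.exp_pos _).le)]
  congr 1
  rw [← Real.exp_sum]
  congr 1
  have hv : ‖v‖ ^ 2 = ∑ i, v i ^ 2 := by
    rw [EuclideanSpace.norm_eq, Real.sq_sqrt (by positivity)]
    simp [Real.norm_eq_abs, sq_abs]
  rw [hv, Finset.mul_sum, Finset.sum_div]
  congr 1; ext i; ring

lemma stdGaussian_lint_exp_neg_norm_sq (d : ℕ) :
    ∫⁻ x, ENNReal.ofReal (rexp (-‖x‖ ^ 2)) ∂(stdGaussian d)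
      ≤ ENNReal.ofReal (rexp (-(d : ℝ)/2)) := by
  have hmeas : Measurable fun x : EuclideanSpace ℝ (Fin d) =>
      ENNReal.ofReal (rexp (-‖x‖ ^ 2)) := by
    apply Measurable.ennreal_ofReal
    exact (Real.continuous_exp.comp (continuous_norm.pow 2).neg).measurable
  rw [_root_.stdGaussian, lintegral_map hmeas (measurable_equiv_symm d)]
  have h2 : ∀ y : Fin d → ℝ,
      ENNReal.ofReal (rexp (-‖(EuclideanSpace.equiv (Fin d) ℝ).symm y‖ ^ 2))
        = ∏ i, ENNReal.ofReal (rexp (-(y i) ^ 2)) := by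
    intro y
    have hn : ‖(EuclideanSpace.equiv (Fin d) ℝ).symm y‖ ^ 2 = ∑ i, (y i) ^ 2 := by
      rw [EuclideanSpace.norm_eq, Real.sq_sqrt (by positivity)]
      simp [Real.norm_eq_abs, sq_abs]
    rw [hn, ← Finset.sum_neg_distrib, Real.exp_sum, ← ENNReal.ofReal_prod_of_nonneg]
    intro i _; positivity
  simp_rw [h2]
  rw [lintegral_pi_prod _ _ _ (fun i => show Measurable fun x : ℝ => ENNReal.ofReal (rexp (-x ^ 2)) from (measurable_id'.pow_const 2).neg.exp.ennreal_ofReal)]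
  calc ∏ _i : Fin d, ∫⁻ x : ℝ, ENNReal.ofReal (rexp (-x ^ 2)) ∂(gaussianReal 0 1)
      ≤ ∏ _i : Fin d, ENNReal.ofReal (rexp (-(1/2) : ℝ)) :=
        Finset.prod_le_prod' fun i _ => gauss_lint_exp_neg_sq
    _ = ENNReal.ofReal (rexp (-(d : ℝ)/2)) := by
        rw [Finset.prod_const, ← ENNReal.ofReal_pow (Real.exp_pos _).le, ← Real.exp_nat_mul]
        norm_num
        ring_nf

lemma sphere_lint_exp_sq (K : ℝ) (hK : 1 ≤ K) (d : ℕ) (hd : 1 ≤ d)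
    (v : EuclideanSpace ℝ (Fin d)) (hv : ‖v‖ ≤ K * Real.sqrt d) :
    ∫⁻ y, ENNReal.ofReal (rexp (2 * (inner ℝ v y : ℝ))) ∂(uniformSphere d)
      ≤ ENNReal.ofReal (rexp (8 * K ^ 2 + 2)) := by
  have hdpos : (0:ℝ) < Real.sqrt d := Real.sqrt_pos.2 (by exact_mod_cast hd)
  set s : ℝ := 4 / Real.sqrt d with hs
  have hspos : 0 < s := by positivity
  have hT : Measurable fun x : EuclideanSpace ℝ (Fin d) => ‖x‖⁻¹ • x :=
    measurable_norm.inv.smul measurable_id'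
  have hmeas : Measurable fun y : EuclideanSpace ℝ (Fin d) =>
      ENNReal.ofReal (rexp (2 * (inner ℝ v y : ℝ))) := by
    apply Measurable.ennreal_ofReal
    exact (Real.continuous_exp.comp
      (continuous_const.mul (continuous_const.inner continuous_id'))).measurable
  rw [uniformSphere, lintegral_map hmeas hT]
  -- pointwise bound
  have hpt : ∀ x : EuclideanSpace ℝ (Fin d),
      ENNReal.ofReal (rexp (2 * (inner ℝ v (‖x‖⁻¹ • x) : ℝ)))
        ≤ ENNReal.ofReal (rexp (s * (inner ℝ v x : ℝ)))
          + ENNReal.ofReal (rexp (-s * (inner ℝ v x : ℝ)))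
          + ENNReal.ofReal (rexp (2 * K * Real.sqrt d + d / 4)) * ENNReal.ofReal (rexp (-‖x‖ ^ 2)) := by
    intro x
    rw [← ENNReal.ofReal_mul (Real.exp_pos _).le, ← Real.exp_add, ← ENNReal.ofReal_add
      (Real.exp_pos _).le (Real.exp_pos _).le, ← ENNReal.ofReal_add
      (by positivity) (Real.exp_pos _).le]
    apply ENNReal.ofReal_le_ofReal
    have hinner : (inner ℝ v (‖x‖⁻¹ • x) : ℝ) = ‖x‖⁻¹ * (inner ℝ v x : ℝ) :=
      real_inner_smul_right v x _
    rcases le_or_gt ‖x‖ (Real.sqrt d / 2) with hx | hx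
    · -- small norm case
      have h1 : (inner ℝ v (‖x‖⁻¹ • x) : ℝ) ≤ K * Real.sqrt d := by
        refine le_trans (real_inner_le_norm v _) ?_
        have : ‖(‖x‖⁻¹ • x)‖ ≤ 1 := by
          rw [norm_smul, norm_inv, norm_norm]
          rcases eq_or_ne x 0 with h | h
          · simp [h]
          · rw [inv_mul_cancel₀ (norm_ne_zero_iff.2 h)]
        calc ‖v‖ * ‖(‖x‖⁻¹ • x)‖ ≤ ‖v‖ * 1 := by
              exact mul_le_mul_of_nonneg_left this (norm_nonneg v)
          _ ≤ K * Real.sqrt d := by rwa [mul_one]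
      have h2 : ‖x‖ ^ 2 ≤ d / 4 := by
        have := Real.sq_sqrt (Nat.cast_nonneg d : (0:ℝ) ≤ d)
        nlinarith [norm_nonneg x]
      have : rexp (2 * (inner ℝ v (‖x‖⁻¹ • x) : ℝ)) ≤ rexp (2 * K * Real.sqrt d + d / 4 + -‖x‖ ^ 2) := by
        apply Real.exp_le_exp.2
        nlinarith
      refine le_trans this ?_
      have := Real.exp_pos (s * (inner ℝ v x : ℝ))
      have := Real.exp_pos (-s * (inner ℝ v x : ℝ))
      linarith
    · -- large norm case
      have hxpos : (0:ℝ) < ‖x‖ := lt_trans (by positivity) hx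
      have habs : 2 * (inner ℝ v (‖x‖⁻¹ • x) : ℝ) ≤ |s * (inner ℝ v x : ℝ)| := by
        rw [hinner, abs_mul, abs_of_pos hspos]
        have h1 : 2 * ‖x‖⁻¹ ≤ s := by
          have h2 : ‖x‖⁻¹ ≤ (Real.sqrt d / 2)⁻¹ := by
            apply inv_anti₀ (by positivity) hx.le
          have h3 : (Real.sqrt d / 2)⁻¹ = 2 / Real.sqrt d := by
            field_simp
          rw [h3] at h2
          rw [hs]
          have h4 : (4:ℝ)/Real.sqrt d = 2*(2/Real.sqrt d) := by ring
          linarith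
        calc 2 * (‖x‖⁻¹ * (inner ℝ v x : ℝ)) ≤ 2 * (‖x‖⁻¹ * |(inner ℝ v x : ℝ)|) := by
              apply mul_le_mul_of_nonneg_left _ (by norm_num : (0:ℝ) ≤ 2)
              exact mul_le_mul_of_nonneg_left (le_abs_self _) (by positivity)
          _ = (2 * ‖x‖⁻¹) * |(inner ℝ v x : ℝ)| := by ring
          _ ≤ s * |(inner ℝ v x : ℝ)| := mul_le_mul_of_nonneg_right h1 (abs_nonneg _)
      have hexp : rexp (2 * (inner ℝ v (‖x‖⁻¹ • x) : ℝ))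
          ≤ rexp (s * (inner ℝ v x : ℝ)) + rexp (-s * (inner ℝ v x : ℝ)) := by
        refine le_trans (Real.exp_le_exp.2 habs) ?_
        rcases le_or_gt 0 (s * (inner ℝ v x : ℝ)) with h | h
        · rw [abs_of_nonneg h]
          have := Real.exp_pos (-s * (inner ℝ v x : ℝ))
          linarith [Real.exp_pos (-s * (inner ℝ v x : ℝ))]
        · rw [abs_of_neg h]
          have h3 : -(s * (inner ℝ v x : ℝ)) = -s * (inner ℝ v x : ℝ) := by ring
          rw [h3]
          linarith [Real.exp_pos (s * (inner ℝ v x : ℝ))]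
      have := Real.exp_pos (2 * K * Real.sqrt d + d / 4 + -‖x‖ ^ 2)
      linarith
  calc ∫⁻ x, ENNReal.ofReal (rexp (2 * (inner ℝ v (‖x‖⁻¹ • x) : ℝ))) ∂(stdGaussian d)
      ≤ ∫⁻ x, (ENNReal.ofReal (rexp (s * (inner ℝ v x : ℝ)))
          + ENNReal.ofReal (rexp (-s * (inner ℝ v x : ℝ)))
          + ENNReal.ofReal (rexp (2 * K * Real.sqrt d + d / 4)) * ENNReal.ofReal (rexp (-‖x‖ ^ 2)))
          ∂(stdGaussian d) := lintegral_mono hpt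
    _ ≤ ENNReal.ofReal (rexp (8 * K ^ 2 + 2)) := by
        have hm1 : Measurable fun x : EuclideanSpace ℝ (Fin d) =>
            ENNReal.ofReal (rexp (s * (inner ℝ v x : ℝ))) := by
          apply Measurable.ennreal_ofReal
          exact (Real.continuous_exp.comp
            (continuous_const.mul (continuous_const.inner continuous_id'))).measurable
        have hm2 : Measurable fun x : EuclideanSpace ℝ (Fin d) =>
            ENNReal.ofReal (rexp (-s * (inner ℝ v x : ℝ))) := by
          apply Measurable.ennreal_ofReal
          exact (Real.continuous_exp.comp
            (continuous_const.mul (continuous_const.inner continuous_id'))).measurable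
        rw [lintegral_add_left (show Measurable fun x : EuclideanSpace ℝ (Fin d) => ENNReal.ofReal (rexp (s * (inner ℝ v x : ℝ))) + ENNReal.ofReal (rexp (-s * (inner ℝ v x : ℝ))) from hm1.add hm2), lintegral_add_left hm1, lintegral_const_mul _
          (by apply Measurable.ennreal_ofReal
              exact (Real.continuous_exp.comp (continuous_norm.pow 2).neg).measurable)]
        have hvd : ‖v‖ ^ 2 ≤ K ^ 2 * d := by
          have h := Real.sq_sqrt (Nat.cast_nonneg d : (0:ℝ) ≤ d)
          nlinarith [norm_nonneg v, hdpos.le]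
        have hsq : s ^ 2 * ‖v‖ ^ 2 / 2 ≤ 8 * K ^ 2 := by
          have h := Real.sq_sqrt (Nat.cast_nonneg d : (0:ℝ) ≤ d)
          have hd1 : (1:ℝ) ≤ d := by exact_mod_cast hd
          rw [hs, div_pow]
          rw [h]
          rw [div_mul_eq_mul_div, div_div]
          rw [div_le_iff₀ (by positivity)]
          nlinarith
        have e1 : ∫⁻ x, ENNReal.ofReal (rexp (s * (inner ℝ v x : ℝ))) ∂(stdGaussian d)
            ≤ ENNReal.ofReal (rexp (8 * K ^ 2)) := by
          rw [stdGaussian_lint_exp_inner]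
          exact ENNReal.ofReal_le_ofReal (Real.exp_le_exp.2 hsq)
        have e2 : ∫⁻ x, ENNReal.ofReal (rexp (-s * (inner ℝ v x : ℝ))) ∂(stdGaussian d)
            ≤ ENNReal.ofReal (rexp (8 * K ^ 2)) := by
          rw [stdGaussian_lint_exp_inner]
          apply ENNReal.ofReal_le_ofReal (Real.exp_le_exp.2 _)
          calc (-s) ^ 2 * ‖v‖ ^ 2 / 2 = s ^ 2 * ‖v‖ ^ 2 / 2 := by ring_nf
            _ ≤ 8 * K ^ 2 := hsq
        have e3 : ENNReal.ofReal (rexp (2 * K * Real.sqrt d + d / 4))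
              * ∫⁻ x, ENNReal.ofReal (rexp (-‖x‖ ^ 2)) ∂(stdGaussian d)
            ≤ ENNReal.ofReal (rexp (4 * K ^ 2)) := by
          calc ENNReal.ofReal (rexp (2 * K * Real.sqrt d + d / 4))
                * ∫⁻ x, ENNReal.ofReal (rexp (-‖x‖ ^ 2)) ∂(stdGaussian d)
              ≤ ENNReal.ofReal (rexp (2 * K * Real.sqrt d + d / 4))
                * ENNReal.ofReal (rexp (-(d : ℝ)/2)) :=
                mul_le_mul_right (stdGaussian_lint_exp_neg_norm_sq d) _
            _ = ENNReal.ofReal (rexp (2 * K * Real.sqrt d + d / 4 + -(d:ℝ)/2)) := by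
                rw [← ENNReal.ofReal_mul (Real.exp_pos _).le, ← Real.exp_add]
            _ ≤ ENNReal.ofReal (rexp (4 * K ^ 2)) := by
                apply ENNReal.ofReal_le_ofReal (Real.exp_le_exp.2 _)
                have h := Real.sq_sqrt (Nat.cast_nonneg d : (0:ℝ) ≤ d)
                nlinarith [sq_nonneg (Real.sqrt d - 4 * K)]
        calc _ ≤ ENNReal.ofReal (rexp (8 * K ^ 2)) + ENNReal.ofReal (rexp (8 * K ^ 2))
              + ENNReal.ofReal (rexp (4 * K ^ 2)) := add_le_add (add_le_add e1 e2) e3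
          _ = ENNReal.ofReal (rexp (8 * K ^ 2) + rexp (8 * K ^ 2) + rexp (4 * K ^ 2)) := by
              rw [← ENNReal.ofReal_add (Real.exp_pos _).le (Real.exp_pos _).le,
                ← ENNReal.ofReal_add (by positivity) (Real.exp_pos _).le]
          _ ≤ ENNReal.ofReal (rexp (8 * K ^ 2 + 2)) := by
              apply ENNReal.ofReal_le_ofReal
              rw [Real.exp_add]
              have h1 : rexp (4 * K ^ 2) ≤ rexp (8 * K ^ 2) :=
                Real.exp_le_exp.2 (by nlinarith)
              have h2 : (3:ℝ) ≤ rexp 2 := by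
                have := Real.add_one_le_exp (2:ℝ)
                nlinarith [Real.exp_pos (1:ℝ), Real.exp_one_gt_d9]
              nlinarith [Real.exp_pos (8 * K ^ 2)]

/-- Corollary A.3: for every `K ≥ 1` there are constants `c > 0` and `n₀`
depending only on `K` such that for all `n ≥ n₀`, `d ≥ 1`, `v` with
`‖v‖₂ ≤ K √d`, and `t ≥ (log n)^{0.9}` with `P[z ≥ t] ≤ exp (-(K+1) log² n)`
(where `z = ⟨v, c⟩`, `c` uniform on `S^{d-1}`), one has
`E[exp z · 1_{z ≥ t}] ≤ exp (-c (log n)^{1.8})`. -/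
theorem stmt10 :
    ∀ K : ℝ, 1 ≤ K → ∃ c : ℝ, ∃ n₀ : ℕ, 0 < c ∧ 0 < n₀ ∧
      ∀ n : ℕ, n₀ ≤ n → ∀ d : ℕ, 1 ≤ d →
        ∀ v : EuclideanSpace ℝ (Fin d), ‖v‖ ≤ K * Real.sqrt d →
          ∀ t : ℝ, (Real.log n) ^ (0.9 : ℝ) ≤ t →
            uniformSphere d {y | t ≤ (inner ℝ v y : ℝ)}
              ≤ ENNReal.ofReal (Real.exp (-(K + 1) * (Real.log n) ^ 2)) →
            ∫ x, Set.indicator {y : EuclideanSpace ℝ (Fin d) | t ≤ (inner ℝ v y : ℝ)}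
                (fun y => Real.exp (inner ℝ v y)) x ∂(uniformSphere d)
              ≤ Real.exp (-c * (Real.log n) ^ (1.8 : ℝ)) := by
  intro K hK
  set C : ℝ := 8 * K ^ 2 + 2 with hC
  refine ⟨1/2, ⌈rexp C⌉₊ + 3, by norm_num, by positivity, ?_⟩
  intro n hn d hd v hv t ht hP
  set L : ℝ := Real.log n with hL
  have hCpos : (0:ℝ) < C := by nlinarith
  have hLC : C ≤ L := by
    have h1 : rexp C ≤ (n:ℝ) := by
      calc rexp C ≤ (⌈rexp C⌉₊ : ℝ) := Nat.le_ceil _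
        _ ≤ (n:ℝ) := by exact_mod_cast le_trans (Nat.le_add_right _ 3) hn
    calc C = Real.log (rexp C) := (Real.log_exp C).symm
      _ ≤ L := Real.log_le_log (Real.exp_pos C) h1
  have hL1 : (1:ℝ) ≤ L := le_trans (by nlinarith) hLC
  -- measurability
  set S : Set (EuclideanSpace ℝ (Fin d)) := {y | t ≤ (inner ℝ v y : ℝ)} with hSdef
  have hg : Continuous fun y : EuclideanSpace ℝ (Fin d) => (inner ℝ v y : ℝ) :=
    continuous_const.inner continuous_id'
  have hS : MeasurableSet S := (isClosed_le continuous_const hg).measurableSet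
  have hf : Measurable fun y : EuclideanSpace ℝ (Fin d) => rexp (inner ℝ v y) :=
    (Real.continuous_exp.comp hg).measurable
  set μ := uniformSphere d with hμ
  -- step 1 : Bochner to lintegral
  have step1 : ∫ x, S.indicator (fun y => rexp (inner ℝ v y)) x ∂μ
      = (∫⁻ x, ENNReal.ofReal (S.indicator (fun y => rexp (inner ℝ v y)) x) ∂μ).toReal := by
    rw [integral_eq_lintegral_of_nonneg_ae]
    · filter_upwards with x
      exact Set.indicator_nonneg (fun y _ => (Real.exp_pos _).le) x
    · exact (hf.indicator hS).aestronglyMeasurable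
  -- Cauchy-Schwarz
  set F : EuclideanSpace ℝ (Fin d) → ℝ≥0∞ := fun y => ENNReal.ofReal (rexp (inner ℝ v y)) with hF
  set G : EuclideanSpace ℝ (Fin d) → ℝ≥0∞ := S.indicator 1 with hG
  have hFG : ∀ x, ENNReal.ofReal (S.indicator (fun y => rexp (inner ℝ v y)) x) = (F * G) x := by
    intro x
    by_cases hx : x ∈ S
    · simp [hF, hG, Set.indicator_of_mem hx]
    · simp [hF, hG, Set.indicator_of_notMem hx]
  have hFmeas : AEMeasurable F μ := (hf.ennreal_ofReal).aemeasurable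
  have hGmeas : AEMeasurable G μ := ((measurable_one.indicator hS)).aemeasurable
  have hconj : Real.HolderConjugate 2 2 := Real.HolderConjugate.two_two
  have CS := ENNReal.lintegral_mul_le_Lp_mul_Lq μ hconj hFmeas hGmeas
  have hF2 : ∀ y, F y ^ (2:ℝ) = ENNReal.ofReal (rexp (2 * (inner ℝ v y : ℝ))) := by
    intro y
    rw [hF, ENNReal.rpow_two, ← ENNReal.ofReal_pow (Real.exp_pos _).le, ← Real.exp_nat_mul]
    norm_num
  have hG2 : ∀ y, G y ^ (2:ℝ) = G y := by
    intro y
    rw [hG]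
    by_cases hy : y ∈ S
    · simp [Set.indicator_of_mem hy]
    · simp [Set.indicator_of_notMem hy]
  have hGint : ∫⁻ y, G y ^ (2:ℝ) ∂μ = μ S := by
    simp_rw [hG2]
    rw [hG, lintegral_indicator_one hS]
  have key : ∫⁻ x, (F * G) x ∂μ
      ≤ ENNReal.ofReal (rexp ((C - (K+1) * L^2) / 2)) := by
    refine le_trans CS ?_
    simp_rw [hF2] at CS ⊢
    rw [hGint]
    have h1 : ∫⁻ y, ENNReal.ofReal (rexp (2 * (inner ℝ v y : ℝ))) ∂μ
        ≤ ENNReal.ofReal (rexp C) := sphere_lint_exp_sq K hK d hd v hv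
    have h2 : μ S ≤ ENNReal.ofReal (rexp (-(K + 1) * L ^ 2)) := hP
    calc (∫⁻ y, ENNReal.ofReal (rexp (2 * (inner ℝ v y : ℝ))) ∂μ) ^ (1/2 : ℝ) * (μ S) ^ (1/2 : ℝ)
        ≤ (ENNReal.ofReal (rexp C)) ^ (1/2 : ℝ)
          * (ENNReal.ofReal (rexp (-(K + 1) * L ^ 2))) ^ (1/2 : ℝ) :=
          mul_le_mul' (ENNReal.rpow_le_rpow h1 (by norm_num))
            (ENNReal.rpow_le_rpow h2 (by norm_num))
      _ = ENNReal.ofReal (rexp ((C - (K+1) * L^2) / 2)) := by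
          rw [ENNReal.ofReal_rpow_of_pos (Real.exp_pos _),
            ENNReal.ofReal_rpow_of_pos (Real.exp_pos _),
            ← ENNReal.ofReal_mul (by positivity),
            ← Real.exp_mul, ← Real.exp_mul, ← Real.exp_add]
          congr 2
          ring
  -- final numeric comparison
  have hnum : rexp ((C - (K+1) * L^2) / 2) ≤ rexp (-(1/2) * L ^ (1.8 : ℝ)) := by
    apply Real.exp_le_exp.2
    have h18 : L ^ (1.8 : ℝ) ≤ L ^ 2 := by
      calc L ^ (1.8 : ℝ) ≤ L ^ (2 : ℝ) :=
          Real.rpow_le_rpow_of_exponent_le hL1 (by norm_num)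
        _ = L ^ 2 := Real.rpow_two L
    nlinarith [sq_nonneg L, hL1, hLC, hK]
  rw [step1]
  simp_rw [hFG]
  calc (∫⁻ x, (F * G) x ∂μ).toReal ≤ rexp ((C - (K+1) * L^2) / 2) :=
      ENNReal.toReal_le_of_le_ofReal (Real.exp_pos _).le key
    _ ≤ rexp (-(1/2) * L ^ (1.8 : ℝ)) := hnum
end

section
/- Let X be a real random variable admitting a probability density with respect to Lebesgue measure. Let r: ℝ → [0,1] be a measurable function with E[r(X)] = ρ, and let u: ℝ → ℝ be a nondecreasing function with E[|u(X)|] < ∞. Let t ∈ ℝ be such that P[X ≥ t] = ρ. Then E[u(X)·r(X)] ≤ E[u(X)·1_{X ≥ t}], where 1_{X ≥ t} is the indicator of the event {X ≥ t}. -/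
open MeasureTheory

/-- Lemma A.4 (continuous Abel's inequality): if `X` has a density with
respect to Lebesgue measure, `r : ℝ → [0,1]` is measurable with
`E[r(X)] = ρ`, `u` is nondecreasing with `E[|u(X)|] < ∞`, and `t` satisfies
`P[X ≥ t] = ρ`, then `E[u(X) r(X)] ≤ E[u(X) 1_{X ≥ t}]`. -/
theorem stmt11 {Ω : Type*} [MeasurableSpace Ω] (P : Measure Ω) [IsProbabilityMeasure P]
    (X : Ω → ℝ) (hX : Measurable X) (hac : P.map X ≪ volume)
    (r : ℝ → ℝ) (hr : Measurable r) (hr01 : ∀ x, r x ∈ Set.Icc (0 : ℝ) 1)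
    (ρ : ℝ) (hρ : ∫ ω, r (X ω) ∂P = ρ)
    (u : ℝ → ℝ) (hu : Monotone u) (hui : Integrable (fun ω => |u (X ω)|) P)
    (t : ℝ) (ht : P {ω | t ≤ X ω} = ENNReal.ofReal ρ) :
    ∫ ω, u (X ω) * r (X ω) ∂P
      ≤ ∫ ω, u (X ω) * Set.indicator (Set.Ici t) (fun _ => (1 : ℝ)) (X ω) ∂P := by
  set ind : ℝ → ℝ := Set.indicator (Set.Ici t) (fun _ => (1 : ℝ)) with hind
  have hum : Measurable u := hu.measurable
  have hindm : Measurable ind := measurable_const.indicator measurableSet_Ici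
  have hρ0 : 0 ≤ ρ := by
    rw [← hρ]; exact integral_nonneg fun ω => (hr01 _).1
  have hUm : AEStronglyMeasurable (fun ω => u (X ω)) P :=
    (hum.comp hX).aestronglyMeasurable
  have hUi : Integrable (fun ω => u (X ω)) P := (integrable_norm_iff hUm).mp (by simpa [Real.norm_eq_abs] using hui)
  -- bounds on ind and r
  have hind01 : ∀ x, ind x ∈ Set.Icc (0 : ℝ) 1 := by
    intro x
    by_cases h : x ∈ Set.Ici t <;> simp [hind, Set.indicator_apply, h]
  -- integrability facts
  have hi1 : Integrable (fun ω => u (X ω) * r (X ω)) P := by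
    refine hui.mono' ((hum.comp hX).mul (hr.comp hX)).aestronglyMeasurable ?_
    filter_upwards with ω
    have h0 := (hr01 (X ω)).1
    have h1 := (hr01 (X ω)).2
    rw [Real.norm_eq_abs, abs_mul]
    calc |u (X ω)| * |r (X ω)| ≤ |u (X ω)| * 1 := by
          apply mul_le_mul_of_nonneg_left _ (abs_nonneg _)
          rw [abs_of_nonneg h0]; exact h1
      _ = |u (X ω)| := mul_one _
  have hi2 : Integrable (fun ω => u (X ω) * ind (X ω)) P := by
    refine hui.mono' ((hum.comp hX).mul (hindm.comp hX)).aestronglyMeasurable ?_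
    filter_upwards with ω
    have h0 := (hind01 (X ω)).1
    have h1 := (hind01 (X ω)).2
    rw [Real.norm_eq_abs, abs_mul]
    calc |u (X ω)| * |ind (X ω)| ≤ |u (X ω)| * 1 := by
          apply mul_le_mul_of_nonneg_left _ (abs_nonneg _)
          rw [abs_of_nonneg h0]; exact h1
      _ = |u (X ω)| := mul_one _
  have hir : Integrable (fun ω => r (X ω)) P := by
    refine (integrable_const (1 : ℝ)).mono' (hr.comp hX).aestronglyMeasurable ?_
    filter_upwards with ω
    rw [Real.norm_eq_abs, abs_of_nonneg (hr01 _).1]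
    simpa using (hr01 (X ω)).2
  have hii : Integrable (fun ω => ind (X ω)) P := by
    refine (integrable_const (1 : ℝ)).mono' (hindm.comp hX).aestronglyMeasurable ?_
    filter_upwards with ω
    rw [Real.norm_eq_abs, abs_of_nonneg (hind01 _).1]
    simpa using (hind01 (X ω)).2
  -- integral of indicator equals ρ
  have hIndInt : ∫ ω, ind (X ω) ∂P = ρ := by
    have heq : (fun ω => ind (X ω))
        = Set.indicator (X ⁻¹' Set.Ici t) (fun _ => (1 : ℝ)) := by
      ext ω
      by_cases h : t ≤ X ω <;> simp [hind, Set.indicator_apply, Set.mem_preimage, Set.mem_Ici, h]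
    rw [heq, integral_indicator_const _ (hX measurableSet_Ici)]
    have : X ⁻¹' Set.Ici t = {ω | t ≤ X ω} := rfl
    rw [this, measureReal_def, ht, smul_eq_mul, mul_one, ENNReal.toReal_ofReal hρ0]
  -- pointwise key inequality
  have key : ∀ ω, u t * (ind (X ω) - r (X ω)) ≤ u (X ω) * (ind (X ω) - r (X ω)) := by
    intro ω
    rcases le_or_gt t (X ω) with h | h
    · have hind1 : ind (X ω) = 1 := by simp [hind, Set.indicator_apply, h]
      have hg : 0 ≤ ind (X ω) - r (X ω) := by
        rw [hind1]; linarith [(hr01 (X ω)).2]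
      exact mul_le_mul_of_nonneg_right (hu h) hg
    · have hind0 : ind (X ω) = 0 := by
        simp [hind, Set.indicator_apply, not_le.mpr h]
      have hg : ind (X ω) - r (X ω) ≤ 0 := by
        rw [hind0]; linarith [(hr01 (X ω)).1]
      exact mul_le_mul_of_nonpos_right (hu h.le) hg
  have hmono : ∫ ω, u t * (ind (X ω) - r (X ω)) ∂P
      ≤ ∫ ω, u (X ω) * (ind (X ω) - r (X ω)) ∂P := by
    refine integral_mono ((hii.sub hir).const_mul _) ?_ key
    have : (fun ω => u (X ω) * (ind (X ω) - r (X ω)))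
        = fun ω => u (X ω) * ind (X ω) - u (X ω) * r (X ω) := by
      ext ω; ring
    rw [this]; exact hi2.sub hi1
  have hleft : ∫ ω, u t * (ind (X ω) - r (X ω)) ∂P = 0 := by
    rw [integral_const_mul, integral_sub hii hir, hIndInt, hρ, sub_self, mul_zero]
  have hright : ∫ ω, u (X ω) * (ind (X ω) - r (X ω)) ∂P
      = ∫ ω, u (X ω) * ind (X ω) ∂P - ∫ ω, u (X ω) * r (X ω) ∂P := by
    rw [← integral_sub hi2 hi1]
    congr 1; ext ω; ring
  rw [hleft, hright] at hmono
  linarith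
end

section
/- Let κ ≥ 1 be a constant, d ≥ 1, and let c ∈ ℝ^d be a fixed unit vector. Let v_1, …, v_n be i.i.d. random vectors in ℝ^d, each distributed as v = s·ĝ where ĝ is a standard Gaussian vector in ℝ^d (law N(0, I_d)) and s is a nonnegative random scalar independent of ĝ with s ≤ κ almost surely. Let Z_c = Σ_{w=1}^n exp(⟨v_w, c⟩). Then E[Z_c] ≥ n and Var[Z_c] ≤ exp(8κ²)·n. -/
open MeasureTheory ProbabilityTheory Real
open scoped ENNReal NNReal

namespace Stmt12Aux

lemma gauss_pdf_shift (t x : ℝ) :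
    gaussianPDFReal 0 1 x * rexp (t * x) = rexp (t^2/2) * gaussianPDFReal t 1 x := by
  simp only [gaussianPDFReal, NNReal.coe_one, mul_one]
  rw [mul_assoc, ← Real.exp_add, mul_comm (rexp (t^2/2)), mul_assoc, ← Real.exp_add]
  ring_nf

lemma integrable_exp_gaussianStd (t : ℝ) :
    Integrable (fun x => rexp (t * x)) (gaussianReal 0 1) := by
  rw [gaussianReal_of_var_ne_zero 0 one_ne_zero]
  have hmeas : Measurable (fun x => (gaussianPDFReal 0 1 x).toNNReal) :=
    (measurable_gaussianPDFReal 0 1).real_toNNReal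
  have h0 : (gaussianPDF 0 1) = fun x => ((gaussianPDFReal 0 1 x).toNNReal : ℝ≥0∞) := rfl
  rw [h0, integrable_withDensity_iff_integrable_smul hmeas]
  have h1 : (fun x => (gaussianPDFReal 0 1 x).toNNReal • rexp (t * x))
      = fun x => rexp (t^2/2) * gaussianPDFReal t 1 x := by
    funext x
    rw [NNReal.smul_def, smul_eq_mul, Real.coe_toNNReal _ (gaussianPDFReal_nonneg 0 1 x),
      gauss_pdf_shift]
  rw [h1]
  exact (integrable_gaussianPDFReal t 1).const_mul _

lemma integral_exp_gaussianStd (t : ℝ) :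
    ∫ x, rexp (t * x) ∂(gaussianReal 0 1) = rexp (t^2/2) := by
  rw [gaussianReal_of_var_ne_zero 0 one_ne_zero]
  have hmeas : Measurable (fun x => (gaussianPDFReal 0 1 x).toNNReal) :=
    (measurable_gaussianPDFReal 0 1).real_toNNReal
  have h0 : (volume : Measure ℝ).withDensity (gaussianPDF 0 1)
      = volume.withDensity (fun x => ((gaussianPDFReal 0 1 x).toNNReal : ℝ≥0∞)) := rfl
  rw [h0, integral_withDensity_eq_integral_smul hmeas]
  have h1 : (fun x => (gaussianPDFReal 0 1 x).toNNReal • rexp (t * x))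
      = fun x => rexp (t^2/2) * gaussianPDFReal t 1 x := by
    funext x
    rw [NNReal.smul_def, smul_eq_mul, Real.coe_toNNReal _ (gaussianPDFReal_nonneg 0 1 x),
      gauss_pdf_shift]
  rw [h1, integral_const_mul, integral_gaussianPDFReal_eq_one t one_ne_zero, mul_one]

lemma pi_prod_integrable_and_eq {n : ℕ} (μ : Measure ℝ) [IsProbabilityMeasure μ]
    (f : Fin n → ℝ → ℝ) (hf : ∀ i, Integrable (f i) μ) :
    Integrable (fun x : Fin n → ℝ => ∏ i, f i (x i)) (Measure.pi fun _ => μ) ∧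
    ∫ x : Fin n → ℝ, ∏ i, f i (x i) ∂(Measure.pi fun _ => μ) = ∏ i, ∫ x, f i x ∂μ := by
  induction n with
  | zero =>
      constructor
      · simp only [Finset.univ_eq_empty, Finset.prod_empty]
        exact integrable_const 1
      · simp
  | succ n ih =>
      obtain ⟨ih1, ih2⟩ := ih (fun i => f i.succ) (fun i => hf i.succ)
      have mp := (measurePreserving_piFinSuccAbove (fun _ : Fin (n + 1) => μ) 0).symm
      have h2 : Integrable (fun p : ℝ × (Fin n → ℝ) => f 0 p.1 * ∏ i, f i.succ (p.2 i))
          ((μ.prod (Measure.pi fun _ : Fin n => μ))) := (hf 0).mul_prod ih1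
      constructor
      · rw [← mp.integrable_comp_emb (MeasurableEquiv.measurableEmbedding _)]
        have hcomp : (fun x : Fin (n+1) → ℝ => ∏ i, f i (x i)) ∘
            (MeasurableEquiv.piFinSuccAbove (fun _ : Fin (n+1) => ℝ) 0).symm
            = fun p : ℝ × (Fin n → ℝ) => f 0 p.1 * ∏ i, f i.succ (p.2 i) := by
          funext p
          simp only [Function.comp_apply, MeasurableEquiv.piFinSuccAbove_symm_apply,
            Fin.insertNthEquiv, Equiv.coe_fn_mk, Fin.insertNth_zero, Fin.prod_univ_succ,
            Fin.cons_zero, Fin.cons_succ, Fin.zero_succAbove, cast_eq]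
        rw [hcomp]
        exact h2
      · rw [← mp.integral_comp']
        simp only [MeasurableEquiv.piFinSuccAbove_symm_apply, Fin.insertNthEquiv,
          Equiv.coe_fn_mk, Fin.insertNth_zero, Fin.prod_univ_succ, Fin.cons_zero, Fin.cons_succ,
          Fin.zero_succAbove, cast_eq]
        rw [integral_prod_mul (f := f 0) (g := fun y : Fin n → ℝ => ∏ i, f i.succ (y i)), ih2]

lemma measurable_euclidSymm (d : ℕ) :
    Measurable ((EuclideanSpace.equiv (Fin d) ℝ).symm : (Fin d → ℝ) → EuclideanSpace ℝ (Fin d)) :=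
  (EuclideanSpace.equiv (Fin d) ℝ).symm.continuous.measurable

instance stdGaussian_isProb (d : ℕ) : IsProbabilityMeasure (stdGaussian d) :=
  Measure.isProbabilityMeasure_map (measurable_euclidSymm d).aemeasurable

lemma mgf_stdGaussian (d : ℕ) (c : EuclideanSpace ℝ (Fin d)) (a : ℝ) :
    Integrable (fun x : EuclideanSpace ℝ (Fin d) => rexp (a * (inner ℝ x c : ℝ))) (stdGaussian d) ∧
    ∫ x, rexp (a * (inner ℝ x c : ℝ)) ∂(stdGaussian d) = rexp (a^2 * (∑ i, c i ^ 2) / 2) := by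
  have hcont : Continuous (fun x : EuclideanSpace ℝ (Fin d) => rexp (a * (inner ℝ x c : ℝ))) :=
    Real.continuous_exp.comp (continuous_const.mul (continuous_id.inner continuous_const))
  have hcomp : ((fun x : EuclideanSpace ℝ (Fin d) => rexp (a * (inner ℝ x c : ℝ))) ∘
      ((EuclideanSpace.equiv (Fin d) ℝ).symm : (Fin d → ℝ) → EuclideanSpace ℝ (Fin d)))
      = fun y : Fin d → ℝ => ∏ i, rexp ((a * c i) * y i) := by
    funext y
    simp only [Function.comp_apply, PiLp.inner_apply, RCLike.inner_apply, conj_trivial]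
    rw [← Real.exp_sum, Finset.mul_sum]
    congr 1
    apply Finset.sum_congr rfl
    intro i _
    show a * (c i * (EuclideanSpace.equiv (Fin d) ℝ).symm y i) = a * c i * y i
    have : (EuclideanSpace.equiv (Fin d) ℝ).symm y i = y i := rfl
    rw [this]; ring
  obtain ⟨hint, heq⟩ := pi_prod_integrable_and_eq (gaussianReal 0 1)
    (fun i x => rexp ((a * c i) * x)) (fun i => integrable_exp_gaussianStd _)
  constructor
  · rw [_root_.stdGaussian, integrable_map_measure hcont.aestronglyMeasurable
      (measurable_euclidSymm d).aemeasurable, hcomp]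
    exact hint
  · rw [_root_.stdGaussian, integral_map (measurable_euclidSymm d).aemeasurable
      hcont.aestronglyMeasurable]
    calc ∫ y : Fin d → ℝ, rexp (a * inner ℝ ((EuclideanSpace.equiv (Fin d) ℝ).symm y) c)
          ∂(Measure.pi fun _ => gaussianReal 0 1)
        = ∫ y : Fin d → ℝ, ∏ i, rexp ((a * c i) * y i)
          ∂(Measure.pi fun _ => gaussianReal 0 1) :=
          integral_congr_ae (Filter.Eventually.of_forall fun y => congrFun hcomp y)
      _ = ∏ i, ∫ x, rexp ((a * c i) * x) ∂(gaussianReal 0 1) := heq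
      _ = rexp (a^2 * (∑ i, c i ^ 2) / 2) := by
          simp_rw [integral_exp_gaussianStd]
          rw [← Real.exp_sum]
          congr 1
          rw [← Finset.sum_div, Finset.mul_sum]
          congr 1
          exact Finset.sum_congr rfl fun i _ => by ring

end Stmt12Aux

/-- Lemma A.5 of the paper (mean and variance of the partition function):
for a fixed unit vector `c` and i.i.d. word vectors `v_1, …, v_n`, each
distributed as `s • ĝ` with `ĝ` standard Gaussian in `ℝ^d` and `s` a
nonnegative scalar with `s ≤ κ` a.s., independent of `ĝ`, the partition
function `Z_c = ∑ w, exp ⟨v_w, c⟩` satisfies `E[Z_c] ≥ n` and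
`Var[Z_c] ≤ exp (8 κ²) · n`. -/
theorem stmt12 (κ : ℝ) (hκ : 1 ≤ κ) (d n : ℕ) (hd : 1 ≤ d)
    (c : EuclideanSpace ℝ (Fin d)) (hc : ‖c‖ = 1)
    (Ω : Type*) [MeasurableSpace Ω] (P : Measure Ω) [IsProbabilityMeasure P]
    (s : Ω → ℝ) (g : Ω → EuclideanSpace ℝ (Fin d))
    (hs : Measurable s) (hg : Measurable g)
    (hindep : IndepFun s g P)
    (hglaw : Measure.map g P = stdGaussian d)
    (hsbd : ∀ᵐ ω ∂P, 0 ≤ s ω ∧ s ω ≤ κ)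
    (v : Fin n → Ω → EuclideanSpace ℝ (Fin d))
    (hvmeas : ∀ w, Measurable (v w))
    (hiid : iIndepFun v P)
    (hvlaw : ∀ w, Measure.map (v w) P = Measure.map (fun ω => s ω • g ω) P) :
    ((n : ℝ) ≤ ∫ ω, ∑ w, Real.exp (inner ℝ (v w ω) c) ∂P) ∧
    variance (fun ω => ∑ w, Real.exp (inner ℝ (v w ω) c)) P ≤ Real.exp (8 * κ ^ 2) * n := by
  classical
  open Stmt12Aux in
  -- sum of squares of c
  have hκ0 : (0:ℝ) ≤ κ := le_trans zero_le_one hκ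
  have hsum : ∑ i, c i ^ 2 = 1 := by
    have h2 : √(∑ i, ‖c i‖ ^ 2) = 1 := by rw [← EuclideanSpace.norm_eq, hc]
    have h3 : ∑ i, ‖c i‖ ^ 2 = 1 := by
      have hnn : 0 ≤ ∑ i, ‖c i‖ ^ 2 := Finset.sum_nonneg fun i _ => sq_nonneg _
      nlinarith [Real.sq_sqrt hnn, h2]
    simpa [Real.norm_eq_abs, sq_abs] using h3
  set ν := stdGaussian d with hν
  set μs := Measure.map s P with hμs
  haveI : IsProbabilityMeasure μs := Measure.isProbabilityMeasure_map hs.aemeasurable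
  have hsg : Measurable fun ω => s ω • g ω := hs.smul hg
  -- joint law
  have hT : Measure.map (fun ω => (s ω, g ω)) P = μs.prod ν := by
    have h := (indepFun_iff_map_prod_eq_prod_map_map hs.aemeasurable hg.aemeasurable).mp hindep
    rw [hglaw] at h
    exact h
  -- a.e. bound on first coordinate of product
  have hAs : ∀ᵐ b ∂μs, b ∈ Set.Icc (0:ℝ) κ :=
    (ae_map_iff hs.aemeasurable measurableSet_Icc).mpr
      (hsbd.mono fun ω hω => Set.mem_Icc.mpr ⟨hω.1, hω.2⟩)
  have hAprod : ∀ᵐ p ∂(μs.prod ν), p.1 ∈ Set.Icc (0:ℝ) κ := by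
    have : Measure.map Prod.fst (μs.prod ν) = μs := by
      rw [Measure.map_fst_prod]; simp
    have h := ae_map_iff (f := (Prod.fst : ℝ × EuclideanSpace ℝ (Fin d) → ℝ))
        (μ := μs.prod ν) measurable_fst.aemeasurable
        (p := fun b : ℝ => b ∈ Set.Icc (0:ℝ) κ) measurableSet_Icc
    rw [this] at h
    exact h.mp hAs
  -- the key computation, for a ≥ 0
  have key : ∀ a : ℝ, 0 ≤ a →
      Integrable (fun ω => rexp (a * (inner ℝ (s ω • g ω) c : ℝ))) P ∧
      ∫ ω, rexp (a * (inner ℝ (s ω • g ω) c : ℝ)) ∂P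
        = ∫ b, rexp (a^2 * b^2 / 2) ∂μs := by
    intro a ha
    set F : ℝ × EuclideanSpace ℝ (Fin d) → ℝ :=
      fun p => rexp (a * (p.1 * (inner ℝ p.2 c : ℝ))) with hF
    have hFc : Continuous F :=
      Real.continuous_exp.comp (continuous_const.mul
        (continuous_fst.mul (continuous_snd.inner continuous_const)))
    -- dominating function
    set G : ℝ × EuclideanSpace ℝ (Fin d) → ℝ :=
      fun p => rexp ((a*κ) * (inner ℝ p.2 c : ℝ)) + rexp ((-(a*κ)) * (inner ℝ p.2 c : ℝ)) with hG
    have hGint : Integrable G (μs.prod ν) := by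
      have hH : Integrable (fun x : EuclideanSpace ℝ (Fin d) =>
          rexp ((a*κ) * (inner ℝ x c : ℝ)) + rexp ((-(a*κ)) * (inner ℝ x c : ℝ))) ν :=
        (mgf_stdGaussian d c (a*κ)).1.add (mgf_stdGaussian d c (-(a*κ))).1
      have hmap : Measure.map Prod.snd (μs.prod ν) = ν := by
        rw [Measure.map_snd_prod]; simp
      have := (integrable_map_measure (hmap ▸ hH.aestronglyMeasurable)
        measurable_snd.aemeasurable (f := (Prod.snd : ℝ × EuclideanSpace ℝ (Fin d) →
          EuclideanSpace ℝ (Fin d)))).mp (by rw [hmap]; exact hH)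
      exact this
    have hFint : Integrable F (μs.prod ν) := by
      refine hGint.mono' hFc.aestronglyMeasurable ?_
      refine hAprod.mono fun p hp => ?_
      have h1 : (0:ℝ) ≤ p.1 := hp.1
      have h2 : p.1 ≤ κ := hp.2
      rw [Real.norm_eq_abs, abs_of_pos (Real.exp_pos _)]
      rcases le_or_gt 0 (inner ℝ p.2 c : ℝ) with ht | ht
      · have : a * (p.1 * (inner ℝ p.2 c : ℝ)) ≤ (a*κ) * (inner ℝ p.2 c : ℝ) := by
          nlinarith [mul_nonneg (mul_nonneg ha ht) (sub_nonneg.mpr h2)]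
        exact le_add_of_le_of_nonneg (Real.exp_le_exp.mpr this) (Real.exp_pos _).le
      · have : a * (p.1 * (inner ℝ p.2 c : ℝ)) ≤ (-(a*κ)) * (inner ℝ p.2 c : ℝ) := by
          nlinarith [mul_nonneg (mul_nonneg ha (neg_nonneg.mpr ht.le)) (add_nonneg hκ0 h1)]
        exact le_add_of_nonneg_of_le (Real.exp_pos _).le (Real.exp_le_exp.mpr this)
    have hsmul : ∀ ω, (inner ℝ (s ω • g ω) c : ℝ) = s ω * (inner ℝ (g ω) c : ℝ) := fun ω =>
      real_inner_smul_left _ _ _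
    constructor
    · have := (integrable_map_measure hFc.aestronglyMeasurable
        (hs.prodMk hg).aemeasurable).mp (by rw [hT]; exact hFint)
      have h2 : (F ∘ fun ω => (s ω, g ω)) = fun ω => rexp (a * (inner ℝ (s ω • g ω) c : ℝ)) := by
        funext ω; simp only [Function.comp_apply, hF, hsmul ω]
      rwa [h2] at this
    · have h1 : ∫ ω, rexp (a * (inner ℝ (s ω • g ω) c : ℝ)) ∂P
          = ∫ p, F p ∂(μs.prod ν) := by
        rw [← hT, integral_map (hs.prodMk hg).aemeasurable hFc.aestronglyMeasurable]
        refine integral_congr_ae (Filter.Eventually.of_forall fun ω => ?_)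
        simp only [hF, hsmul ω]
      rw [h1, integral_prod F hFint]
      refine integral_congr_ae (Filter.Eventually.of_forall fun b => ?_)
      have h3 : ∀ x : EuclideanSpace ℝ (Fin d),
          F (b, x) = rexp ((a*b) * (inner ℝ x c : ℝ)) := by
        intro x; simp only [hF]; ring_nf
      calc ∫ x, F (b, x) ∂ν = ∫ x, rexp ((a*b) * (inner ℝ x c : ℝ)) ∂ν :=
            integral_congr_ae (Filter.Eventually.of_forall fun x => h3 x)
        _ = rexp ((a*b)^2 * (∑ i, c i ^ 2) / 2) := (mgf_stdGaussian d c (a*b)).2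
        _ = rexp (a^2 * b^2 / 2) := by rw [hsum]; congr 1; ring
  obtain ⟨kint1, keq1⟩ := key 1 zero_le_one
  obtain ⟨kint2, keq2⟩ := key 2 zero_le_two
  -- moment bounds over μs
  have hm1 : (1:ℝ) ≤ ∫ b, rexp ((1:ℝ)^2 * b^2 / 2) ∂μs := by
    have hint : Integrable (fun b => rexp ((1:ℝ)^2 * b^2 / 2)) μs := by
      refine (integrable_const (rexp (κ^2/2))).mono'
        (Continuous.aestronglyMeasurable (by fun_prop)) ?_
      refine hAs.mono fun b hb => ?_
      rw [Real.norm_eq_abs, abs_of_pos (Real.exp_pos _)]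
      apply Real.exp_le_exp.mpr
      nlinarith [hb.1, hb.2]
    calc (1:ℝ) = ∫ _, (1:ℝ) ∂μs := by simp
      _ ≤ _ := by
        refine integral_mono_ae (integrable_const 1) hint ?_
        exact Filter.Eventually.of_forall fun b => Real.one_le_exp (by positivity)
  have hm2 : ∫ b, rexp ((2:ℝ)^2 * b^2 / 2) ∂μs ≤ rexp (2 * κ^2) := by
    have hint : Integrable (fun b => rexp ((2:ℝ)^2 * b^2 / 2)) μs := by
      refine (integrable_const (rexp (2*κ^2))).mono'
        (Continuous.aestronglyMeasurable (by fun_prop)) ?_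
      refine hAs.mono fun b hb => ?_
      rw [Real.norm_eq_abs, abs_of_pos (Real.exp_pos _)]
      apply Real.exp_le_exp.mpr
      nlinarith [hb.1, hb.2]
    calc ∫ b, rexp ((2:ℝ)^2 * b^2 / 2) ∂μs ≤ ∫ _, rexp (2*κ^2) ∂μs := by
          refine integral_mono_ae hint (integrable_const _) ?_
          refine hAs.mono fun b hb => Real.exp_le_exp.mpr (by nlinarith [hb.1, hb.2])
      _ = rexp (2*κ^2) := by simp
  -- transfer to each v w
  have hXcont : ∀ a : ℝ, Continuous (fun x : EuclideanSpace ℝ (Fin d) =>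
      rexp (a * (inner ℝ x c : ℝ))) := fun a =>
    Real.continuous_exp.comp (continuous_const.mul (continuous_id.inner continuous_const))
  have transfer : ∀ (a : ℝ) (w : Fin n),
      Integrable (fun ω => rexp (a * (inner ℝ (s ω • g ω) c : ℝ))) P →
      Integrable (fun ω => rexp (a * (inner ℝ (v w ω) c : ℝ))) P ∧
      ∫ ω, rexp (a * (inner ℝ (v w ω) c : ℝ)) ∂P
        = ∫ ω, rexp (a * (inner ℝ (s ω • g ω) c : ℝ)) ∂P := by
    intro a w hint
    have hmv : AEMeasurable (v w) P := (hvmeas w).aemeasurable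
    have hmsg : AEMeasurable (fun ω => s ω • g ω) P := hsg.aemeasurable
    have hasm1 : AEStronglyMeasurable (fun x : EuclideanSpace ℝ (Fin d) =>
        rexp (a * (inner ℝ x c : ℝ))) (Measure.map (v w) P) := (hXcont a).aestronglyMeasurable
    have hasm2 : AEStronglyMeasurable (fun x : EuclideanSpace ℝ (Fin d) =>
        rexp (a * (inner ℝ x c : ℝ))) (Measure.map (fun ω => s ω • g ω) P) :=
      (hXcont a).aestronglyMeasurable
    constructor
    · have h2 : Integrable (fun x : EuclideanSpace ℝ (Fin d) => rexp (a * (inner ℝ x c : ℝ)))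
          (Measure.map (fun ω => s ω • g ω) P) :=
        (integrable_map_measure hasm2 hmsg).mpr hint
      have h3 : Integrable (fun x : EuclideanSpace ℝ (Fin d) => rexp (a * (inner ℝ x c : ℝ)))
          (Measure.map (v w) P) := by rw [hvlaw w]; exact h2
      exact (integrable_map_measure hasm1 hmv).mp h3
    · rw [← integral_map hmv hasm1, hvlaw w, integral_map hmsg hasm2]
  -- per-w facts
  set φ : EuclideanSpace ℝ (Fin d) → ℝ := fun y => rexp ((inner ℝ y c : ℝ)) with hφ
  have hφm : Measurable φ :=
    (Real.continuous_exp.comp (continuous_id.inner continuous_const)).measurable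
  set X : Fin n → Ω → ℝ := fun w => φ ∘ v w with hX
  have hXmeas : ∀ w, Measurable (X w) := fun w => hφm.comp (hvmeas w)
  have hXone : ∀ (w : Fin n) (ω : Ω), X w ω = rexp (1 * (inner ℝ (v w ω) c : ℝ)) := by
    intro w ω; simp [hX, hφ]
  have hint1 : ∀ w, Integrable (X w) P := by
    intro w
    have := (transfer 1 w kint1).1
    refine this.congr (Filter.Eventually.of_forall fun ω => ?_)
    rw [hXone]
  have hmean1 : ∀ w, (1:ℝ) ≤ ∫ ω, X w ω ∂P := by
    intro w
    have he : ∫ ω, X w ω ∂P = ∫ ω, rexp (1 * (inner ℝ (v w ω) c : ℝ)) ∂P :=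
      integral_congr_ae (Filter.Eventually.of_forall fun ω => hXone w ω)
    rw [he, (transfer 1 w kint1).2, keq1]
    exact hm1
  have hsq : ∀ w, (fun ω => X w ω ^ 2) = fun ω => rexp (2 * (inner ℝ (v w ω) c : ℝ)) := by
    intro w
    funext ω
    simp only [hX, hφ, Function.comp_apply]
    rw [sq, ← Real.exp_add, two_mul]
  have hsqint : ∀ w, Integrable (fun ω => X w ω ^ 2) P := by
    intro w; rw [hsq w]; exact (transfer 2 w kint2).1
  have hmem : ∀ w, MemLp (X w) 2 P := fun w =>
    (memLp_two_iff_integrable_sq (hXmeas w).aestronglyMeasurable).mpr (hsqint w)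
  have hvarw : ∀ w, variance (X w) P ≤ rexp (2 * κ^2) := by
    intro w
    have h1 := variance_le_expectation_sq (μ := P) (hXmeas w).aestronglyMeasurable
    have h2 : ∫ ω, (X w ^ 2) ω ∂P = ∫ ω, rexp (2 * (inner ℝ (v w ω) c : ℝ)) ∂P := by
      refine integral_congr_ae (Filter.Eventually.of_forall fun ω => ?_)
      rw [Pi.pow_apply, ← hsq w]
    rw [h2, (transfer 2 w kint2).2, keq2] at h1
    exact h1.trans hm2
  have hZfun : (fun ω => ∑ w, rexp ((inner ℝ (v w ω) c : ℝ))) = ∑ w, X w := by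
    funext ω
    rw [Finset.sum_apply]
    exact Finset.sum_congr rfl fun w _ => by simp [hX, hφ]
  constructor
  · have h1 : ∫ ω, ∑ w, rexp ((inner ℝ (v w ω) c : ℝ)) ∂P = ∑ w, ∫ ω, X w ω ∂P := by
      rw [show (fun ω => ∑ w, rexp ((inner ℝ (v w ω) c : ℝ)))
        = fun ω => ∑ w, X w ω from funext fun ω =>
          Finset.sum_congr rfl fun w _ => by simp [hX, hφ]]
      exact integral_finset_sum _ fun w _ => hint1 w
    rw [h1]
    calc (n:ℝ) = ∑ _w : Fin n, (1:ℝ) := by simp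
      _ ≤ ∑ w, ∫ ω, X w ω ∂P := Finset.sum_le_sum fun w _ => hmean1 w
  · rw [hZfun]
    have hpair : Set.Pairwise (↑(Finset.univ : Finset (Fin n)))
        (fun i j => IndepFun (X i) (X j) P) := by
      intro i _ j _ hij
      exact (hiid.indepFun hij).comp hφm hφm
    rw [IndepFun.variance_sum (fun w _ => hmem w) hpair]
    calc ∑ w, variance (X w) P ≤ ∑ _w : Fin n, rexp (2 * κ^2) :=
          Finset.sum_le_sum fun w _ => hvarw w
      _ = n * rexp (2 * κ^2) := by simp [mul_comm]
      _ ≤ Real.exp (8 * κ ^ 2) * n := by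
          rw [mul_comm]
          apply mul_le_mul_of_nonneg_right _ (Nat.cast_nonneg n)
          exact Real.exp_le_exp.mpr (by nlinarith [sq_nonneg κ])
end

section
/- Let κ ≥ 1, d ≥ 1, 0 ≤ ε₂ ≤ 1/2, and let c ∈ ℝ^d be fixed. Let c′ be a random vector in ℝ^d satisfying E[exp(κ√d·‖c′ − c‖₂)] ≤ 1 + ε₂. Then for every v ∈ ℝ^d with ‖v‖₂ ≤ κ√d: (1 − ε₂)·exp(⟨v, c⟩) ≤ E[exp(⟨v, c′⟩)] ≤ (1 + ε₂)·exp(⟨v, c⟩). -/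
open MeasureTheory ProbabilityTheory

/-- The slow-random-walk estimate of the main theorem: if the random vector
`c'` satisfies `E[exp (κ √d ‖c' - c‖₂)] ≤ 1 + ε₂` with `0 ≤ ε₂ ≤ 1/2`, then
for every `v` with `‖v‖₂ ≤ κ √d`,
`(1 - ε₂) exp ⟨v, c⟩ ≤ E[exp ⟨v, c'⟩] ≤ (1 + ε₂) exp ⟨v, c⟩`. -/
theorem stmt17 {Ω : Type*} [MeasurableSpace Ω] (P : Measure Ω) [IsProbabilityMeasure P]
    (κ : ℝ) (hκ : 1 ≤ κ) (d : ℕ) (hd : 1 ≤ d) (ε₂ : ℝ) (hε₂ : 0 ≤ ε₂) (hε₂' : ε₂ ≤ 1 / 2)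
    (c : EuclideanSpace ℝ (Fin d)) (c' : Ω → EuclideanSpace ℝ (Fin d))
    (hmeas : AEMeasurable c' P)
    (hint : Integrable (fun ω => Real.exp (κ * Real.sqrt d * ‖c' ω - c‖)) P)
    (hbound : ∫ ω, Real.exp (κ * Real.sqrt d * ‖c' ω - c‖) ∂P ≤ 1 + ε₂) :
    ∀ v : EuclideanSpace ℝ (Fin d), ‖v‖ ≤ κ * Real.sqrt d →
      (1 - ε₂) * Real.exp (inner ℝ v c) ≤ ∫ ω, Real.exp (inner ℝ v (c' ω)) ∂P ∧
      ∫ ω, Real.exp (inner ℝ v (c' ω)) ∂P ≤ (1 + ε₂) * Real.exp (inner ℝ v c) := by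
  intro v hv
  set K : ℝ := κ * Real.sqrt d with hK
  have hexp_pos : (0:ℝ) < Real.exp (inner ℝ v c) := Real.exp_pos _
  -- pointwise bound on the inner product increment
  have hpt : ∀ ω, |(inner ℝ v (c' ω - c) : ℝ)| ≤ K * ‖c' ω - c‖ := by
    intro ω
    refine le_trans (abs_real_inner_le_norm v _) ?_
    exact mul_le_mul_of_nonneg_right hv (norm_nonneg _)
  have hsplit : ∀ ω, (inner ℝ v (c' ω) : ℝ) = inner ℝ v c + inner ℝ v (c' ω - c) := by
    intro ω; rw [inner_sub_right]; ring
  -- upper pointwise bound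
  have hub : ∀ ω, Real.exp (inner ℝ v (c' ω)) ≤
      Real.exp (inner ℝ v c) * Real.exp (K * ‖c' ω - c‖) := by
    intro ω
    rw [hsplit ω, Real.exp_add]
    refine mul_le_mul_of_nonneg_left ?_ hexp_pos.le
    exact Real.exp_le_exp.mpr (le_trans (le_abs_self _) (hpt ω))
  -- lower pointwise bound
  have hlb : ∀ ω, Real.exp (inner ℝ v c) * (2 - Real.exp (K * ‖c' ω - c‖)) ≤
      Real.exp (inner ℝ v (c' ω)) := by
    intro ω
    rw [hsplit ω, Real.exp_add]
    refine mul_le_mul_of_nonneg_left ?_ hexp_pos.le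
    have h2 : (2:ℝ) ≤ Real.exp (inner ℝ v (c' ω - c)) + Real.exp (-(inner ℝ v (c' ω - c))) := by
      have := Real.one_le_cosh (inner ℝ v (c' ω - c) : ℝ)
      rw [Real.cosh_eq] at this
      linarith
    have h3 : Real.exp (-(inner ℝ v (c' ω - c) : ℝ)) ≤ Real.exp (K * ‖c' ω - c‖) :=
      Real.exp_le_exp.mpr (le_trans (neg_le_abs _) (hpt ω))
    linarith
  -- measurability
  have hm : AEStronglyMeasurable (fun ω => Real.exp (inner ℝ v (c' ω))) P := by
    have hc : Continuous fun x : EuclideanSpace ℝ (Fin d) => Real.exp (inner ℝ v x) :=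
      Real.continuous_exp.comp (continuous_const.inner continuous_id)
    exact (hc.measurable.comp_aemeasurable hmeas).aestronglyMeasurable
  -- integrability
  have hg : Integrable (fun ω => Real.exp (inner ℝ v c) * Real.exp (K * ‖c' ω - c‖)) P :=
    hint.const_mul _
  have hf : Integrable (fun ω => Real.exp (inner ℝ v (c' ω))) P := by
    refine hg.mono' hm ?_
    filter_upwards with ω
    rw [Real.norm_eq_abs, abs_of_nonneg (Real.exp_nonneg _)]
    exact hub ω
  have hgint : ∫ ω, Real.exp (inner ℝ v c) * Real.exp (K * ‖c' ω - c‖) ∂P =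
      Real.exp (inner ℝ v c) * ∫ ω, Real.exp (K * ‖c' ω - c‖) ∂P := integral_const_mul _ _
  constructor
  · -- lower bound
    have hl : Integrable (fun ω => Real.exp (inner ℝ v c) * (2 - Real.exp (K * ‖c' ω - c‖))) P := by
      have : (fun ω => Real.exp (inner ℝ v c) * (2 - Real.exp (K * ‖c' ω - c‖))) =
          fun ω => Real.exp (inner ℝ v c) * 2 - Real.exp (inner ℝ v c) * Real.exp (K * ‖c' ω - c‖) := by
        funext ω; ring
      rw [this]
      exact (integrable_const _).sub hg
    have h1 : ∫ ω, Real.exp (inner ℝ v c) * (2 - Real.exp (K * ‖c' ω - c‖)) ∂P ≤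
        ∫ ω, Real.exp (inner ℝ v (c' ω)) ∂P := integral_mono hl hf hlb
    have h2 : ∫ ω, Real.exp (inner ℝ v c) * (2 - Real.exp (K * ‖c' ω - c‖)) ∂P =
        Real.exp (inner ℝ v c) * (2 - ∫ ω, Real.exp (K * ‖c' ω - c‖) ∂P) := by
      rw [integral_const_mul, integral_sub (integrable_const _) hint, integral_const]
      simp
    rw [h2] at h1
    have : (1 - ε₂) * Real.exp (inner ℝ v c) ≤
        Real.exp (inner ℝ v c) * (2 - ∫ ω, Real.exp (K * ‖c' ω - c‖) ∂P) := by
      rw [mul_comm (1 - ε₂)]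
      exact mul_le_mul_of_nonneg_left (by linarith) hexp_pos.le
    linarith
  · -- upper bound
    have h1 : ∫ ω, Real.exp (inner ℝ v (c' ω)) ∂P ≤
        ∫ ω, Real.exp (inner ℝ v c) * Real.exp (K * ‖c' ω - c‖) ∂P := integral_mono hf hg hub
    rw [hgint] at h1
    have : Real.exp (inner ℝ v c) * ∫ ω, Real.exp (K * ‖c' ω - c‖) ∂P ≤
        (1 + ε₂) * Real.exp (inner ℝ v c) := by
      rw [mul_comm (1 + ε₂)]
      exact mul_le_mul_of_nonneg_left hbound hexp_pos.le
    linarith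
end
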